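/- For n ≥ 3, let α be the automorphism of GL(n,F₂) given by α(g) = (g⁻¹)ᵗ. There is no bijection σ : F₂ⁿ → F₂ⁿ satisfying σ(g·x) = α(g)·σ(x) for all g ∈ GL(n,F₂) and x ∈ F₂ⁿ. -/

import Mathlib

open Matrix

private lemma transpose_stdBasisMatrix' {n : ℕ} (i j : Fin n) (c : ZMod 2) :
    (Matrix.single i j c)ᵀ = Matrix.single j i c := by
  ext a b
  simp [Matrix.single, transpose_apply, and_comm]

private lemma key_fixed {n : ℕ} [NeZero n] (hn : 3 ≤ n) (v : Fin n → ZMod 2)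
    (hv : ∀ i j : Fin n, i ≠ j → j ≠ 0 →
      (transvection i j (1 : ZMod 2))ᵀ.mulVec v = v) : v = 0 := by
  haveI : NeZero n := ⟨by omega⟩
  funext i
  set j : Fin n := if i = ⟨1, by omega⟩ then ⟨2, by omega⟩ else ⟨1, by omega⟩ with hj
  have hj0 : j ≠ 0 := by
    rcases eq_or_ne i ⟨1, by omega⟩ with h | h <;>
      simp [hj, h, Fin.ext_iff, Fin.val_zero]
  have hij : i ≠ j := by
    rcases eq_or_ne i ⟨1, by omega⟩ with h | h <;> simp [hj, h]
  have h := hv i j hij hj0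
  have h2 : ((transvection i j (1 : ZMod 2))ᵀ.mulVec v) j = v j + v i := by
    rw [transvection, transpose_add, transpose_one, transpose_stdBasisMatrix',
      add_mulVec, one_mulVec, single_mulVec]
    simp
  rw [h] at h2
  have : v i = 0 := by
    have := congrArg (· + (- v j)) h2.symm
    simpa [add_assoc] using this
  simpa using this

/-- For `n ≥ 3`, there is no bijection `σ` of `F₂ⁿ` intertwining the natural
action of `GL(n,F₂)` with the action twisted by the automorphism
`g ↦ (g⁻¹)ᵗ`. -/
theorem no_twisted_intertwiner {n : ℕ} (hn : 3 ≤ n) :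
    ¬ ∃ σ : (Fin n → ZMod 2) ≃ (Fin n → ZMod 2),
      ∀ (g : GL (Fin n) (ZMod 2)) (x : Fin n → ZMod 2),
        σ ((g : Matrix (Fin n) (Fin n) (ZMod 2)).mulVec x) =
          (Matrix.transpose ((g⁻¹ : GL (Fin n) (ZMod 2)) :
            Matrix (Fin n) (Fin n) (ZMod 2))).mulVec (σ x) := by
  haveI : NeZero n := ⟨by omega⟩
  rintro ⟨σ, hσ⟩
  -- For each i ≠ j with j ≠ 0, the transvection fixes e₀ and 0,
  -- hence σ e₀ and σ 0 are fixed by the transposed transvection.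
  have main : ∀ x : Fin n → ZMod 2,
      (∀ i j : Fin n, i ≠ j → j ≠ 0 →
        (transvection i j (1 : ZMod 2)).mulVec x = x) → σ x = x → False ∨ True := by
    intro _ _ _; right; trivial
  have step : ∀ x : Fin n → ZMod 2,
      (∀ i j : Fin n, i ≠ j → j ≠ 0 →
        (transvection i j (1 : ZMod 2)).mulVec x = x) → σ x = 0 := by
    intro x hx
    apply key_fixed hn
    intro i j hij hj0
    have hTT : transvection i j (1 : ZMod 2) * transvection i j (1 : ZMod 2) = 1 := by
      rw [transvection_mul_transvection_same _ _ hij,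
        show (1 : ZMod 2) + 1 = 0 from by decide, transvection_zero]
    set g : GL (Fin n) (ZMod 2) :=
      ⟨transvection i j (1 : ZMod 2), transvection i j (1 : ZMod 2), hTT, hTT⟩ with hg
    have hcoe : (g : Matrix (Fin n) (Fin n) (ZMod 2)) = transvection i j (1 : ZMod 2) := rfl
    have hcoeinv : ((g⁻¹ : GL (Fin n) (ZMod 2)) : Matrix (Fin n) (Fin n) (ZMod 2)) =
        transvection i j (1 : ZMod 2) := rfl
    have h := hσ g x
    rw [hcoe, hcoeinv, hx i j hij hj0] at h
    exact h.symm
  have he0 : ∀ i j : Fin n, i ≠ j → j ≠ 0 →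
      (transvection i j (1 : ZMod 2)).mulVec (Pi.single (0 : Fin n) (1 : ZMod 2)) =
        Pi.single (0 : Fin n) (1 : ZMod 2) := by
    intro i j hij hj0
    rw [transvection, add_mulVec, one_mulVec, single_mulVec]
    have : (Pi.single (0 : Fin n) (1 : ZMod 2) : Fin n → ZMod 2) j = 0 := by rw [Pi.single_eq_of_ne hj0]
    simp [this]
  have h0 : ∀ i j : Fin n, i ≠ j → j ≠ 0 →
      (transvection i j (1 : ZMod 2)).mulVec (0 : Fin n → ZMod 2) = 0 := by
    intro i j _ _; exact mulVec_zero _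
  have h1 : σ (Pi.single (0 : Fin n) (1 : ZMod 2)) = 0 := step _ he0
  have h2 : σ 0 = 0 := step _ h0
  have := σ.injective (h1.trans h2.symm)
  have := congrFun this 0
  simp at this
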